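/- The unique v ∈ V with -v_x + 2v² = u (for u = x^{-2} + u_0 + ∑_{k≥2} u_k x^k) satisfies v_1 = u_0, v_3 = 2u_0² - u_2, v_4 = -(1/2)u_3, v_5 = (8/3)u_0³ - (4/3)u_0 u_2 - (1/3)u_4, and v_6 = -(1/2)u_0 u_3 - (1/4)u_5. -/

import Mathlib

/-- Formal derivative on Laurent series: `(D q).coeff k = (k+1) * q.coeff (k+1)`. -/
noncomputable def D (q : LaurentSeries ℂ) : LaurentSeries ℂ :=
  HahnSeries.ofSuppBddBelow (fun k => ((k + 1 : ℤ) : ℂ) * q.coeff (k + 1))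
    (HahnSeries.forallLTEqZero_supp_BddBelow _ (q.order - 1) (fun m hm => by
      have h : m + 1 < q.order := by omega
      simp [HahnSeries.coeff_eq_zero_of_lt_order h]))

@[simp] lemma D_coeff (q : LaurentSeries ℂ) (k : ℤ) :
    (D q).coeff k = ((k + 1 : ℤ) : ℂ) * q.coeff (k + 1) := rfl

/-- The residue: coefficient of `x⁻¹`. -/
noncomputable def res (q : LaurentSeries ℂ) : ℂ := q.coeff (-1)

/-- `V`: series of the form `(1/2)x⁻¹ + v₁x + ∑_{k≥3} vₖ xᵏ`. -/
def memV (v : LaurentSeries ℂ) : Prop :=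
  v.coeff (-1) = 1/2 ∧ v.coeff 0 = 0 ∧ v.coeff 2 = 0 ∧ ∀ k < (-1 : ℤ), v.coeff k = 0

/-- `W`: series of the form `w₀ + ∑_{k≥2} wₖ xᵏ`. -/
def memW (w : LaurentSeries ℂ) : Prop :=
  w.coeff 1 = 0 ∧ ∀ k < (0 : ℤ), w.coeff k = 0

/-- `U`: series of the form `x⁻² + u₀ + ∑_{k≥2} uₖ xᵏ`. -/
def memU (u : LaurentSeries ℂ) : Prop :=
  u.coeff (-2) = 1 ∧ u.coeff (-1) = 0 ∧ u.coeff 1 = 0 ∧ ∀ k < (-2 : ℤ), u.coeff k = 0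

/-- The Miura transformation `M(v) = v_x + 2v²`. -/
noncomputable def M (v : LaurentSeries ℂ) : LaurentSeries ℂ := D v + 2 * v ^ 2

/-- The composition `M ∘ R` of Miura with the reflection `R(v) = -v`:
`(M∘R)(v) = -v_x + 2v²`. -/
noncomputable def MR (v : LaurentSeries ℂ) : LaurentSeries ℂ := -(D v) + 2 * v ^ 2

lemma mul_coeff_zero_of (x y : LaurentSeries ℂ) (a b n : ℤ)
    (hx : ∀ i < a, x.coeff i = 0) (hy : ∀ j < b, y.coeff j = 0) (hn : n < a + b) :
    (x * y).coeff n = 0 := by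
  rw [HahnSeries.coeff_mul]
  apply Finset.sum_eq_zero
  intro ij hij
  rw [Finset.mem_addAntidiagonal] at hij
  obtain ⟨h1, h2, h3⟩ := hij
  have hi : a ≤ ij.1 := by by_contra hc; exact h1 (hx _ (lt_of_not_ge hc))
  have hj : b ≤ ij.2 := by by_contra hc; exact h2 (hy _ (lt_of_not_ge hc))
  omega

lemma two_mul_coeff (q : LaurentSeries ℂ) (n : ℤ) :
    ((2 : LaurentSeries ℂ) * q).coeff n = 2 * q.coeff n := by
  rw [two_mul, HahnSeries.coeff_add]; ring

/-- First coefficients of the solution `v ∈ V` of `-v_x + 2v² = u`, `u ∈ U`. -/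
theorem stmt10 (u v : LaurentSeries ℂ) (hu : memU u) (hv : memV v) (h : MR v = u) :
    v.coeff 1 = u.coeff 0 ∧
    v.coeff 3 = 2 * (u.coeff 0) ^ 2 - u.coeff 2 ∧
    v.coeff 4 = -(1/2) * u.coeff 3 ∧
    v.coeff 5 = (8/3) * (u.coeff 0) ^ 3 - (4/3) * u.coeff 0 * u.coeff 2 - (1/3) * u.coeff 4 ∧
    v.coeff 6 = -(1/2) * u.coeff 0 * u.coeff 3 - (1/4) * u.coeff 5 := by
  obtain ⟨hv1, hv0, hv2, hvlow⟩ := hv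
  set s : LaurentSeries ℂ := HahnSeries.single (-1) (1/2 : ℂ)
      + HahnSeries.single 1 (v.coeff 1) + HahnSeries.single 3 (v.coeff 3)
      + HahnSeries.single 4 (v.coeff 4) + HahnSeries.single 5 (v.coeff 5)
      + HahnSeries.single 6 (v.coeff 6) with hsdef
  set r : LaurentSeries ℂ := v - s with hrdef
  have hslow : ∀ i < (-1 : ℤ), s.coeff i = 0 := by
    intro i hi
    simp only [hsdef, HahnSeries.coeff_add, HahnSeries.coeff_single]
    rw [if_neg (by omega), if_neg (by omega), if_neg (by omega), if_neg (by omega),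
      if_neg (by omega), if_neg (by omega)]
    ring
  have hrlow : ∀ k < (7 : ℤ), r.coeff k = 0 := by
    intro k hk
    rw [hrdef, HahnSeries.coeff_sub]
    simp only [hsdef, HahnSeries.coeff_add, HahnSeries.coeff_single]
    have : k < -1 ∨ k = -1 ∨ k = 0 ∨ k = 1 ∨ k = 2 ∨ k = 3 ∨ k = 4 ∨ k = 5 ∨ k = 6 := by omega
    rcases this with hc | hc | hc | hc | hc | hc | hc | hc | hc
    · rw [hvlow k hc, if_neg (by omega), if_neg (by omega), if_neg (by omega),
        if_neg (by omega), if_neg (by omega), if_neg (by omega)]; ring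
    all_goals subst hc
    · rw [hv1]; norm_num
    · rw [hv0]; norm_num
    · norm_num
    · rw [hv2]; norm_num
    all_goals norm_num
  have hveq : v = s + r := by rw [hrdef]; ring
  have hv2eq : ∀ n : ℤ, n < 6 → (v ^ 2).coeff n = (s * s).coeff n := by
    intro n hn
    have : v ^ 2 = s * s + (s * r + (r * s + r * r)) := by rw [hveq]; ring
    rw [this, HahnSeries.coeff_add, HahnSeries.coeff_add, HahnSeries.coeff_add,
      mul_coeff_zero_of s r (-1) 7 n hslow hrlow (by omega),
      mul_coeff_zero_of r s 7 (-1) n hrlow hslow (by omega),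
      mul_coeff_zero_of r r 7 7 n hrlow hrlow (by omega)]
    ring
  have key : ∀ n : ℤ, -(((n + 1 : ℤ) : ℂ) * v.coeff (n + 1)) + 2 * (v ^ 2).coeff n
      = u.coeff n := by
    intro n
    rw [← h]
    rw [MR, HahnSeries.coeff_add, HahnSeries.coeff_neg, D_coeff, two_mul_coeff]
  have ss : ∀ n : ℤ, (s * s).coeff n = (if n = -2 then (1/4 : ℂ) else 0)
      + (if n = 0 then v.coeff 1 / 2 else 0) + (if n = 2 then v.coeff 3 / 2 else 0)
      + (if n = 3 then v.coeff 4 / 2 else 0) + (if n = 4 then v.coeff 5 / 2 else 0)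
      + (if n = 5 then v.coeff 6 / 2 else 0)
      + (if n = 0 then v.coeff 1 / 2 else 0) + (if n = 2 then v.coeff 1 * v.coeff 1 else 0)
      + (if n = 4 then v.coeff 1 * v.coeff 3 else 0)
      + (if n = 5 then v.coeff 1 * v.coeff 4 else 0)
      + (if n = 6 then v.coeff 1 * v.coeff 5 else 0)
      + (if n = 7 then v.coeff 1 * v.coeff 6 else 0)
      + (if n = 2 then v.coeff 3 / 2 else 0) + (if n = 4 then v.coeff 3 * v.coeff 1 else 0)
      + (if n = 6 then v.coeff 3 * v.coeff 3 else 0)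
      + (if n = 7 then v.coeff 3 * v.coeff 4 else 0)
      + (if n = 8 then v.coeff 3 * v.coeff 5 else 0)
      + (if n = 9 then v.coeff 3 * v.coeff 6 else 0)
      + (if n = 3 then v.coeff 4 / 2 else 0) + (if n = 5 then v.coeff 4 * v.coeff 1 else 0)
      + (if n = 7 then v.coeff 4 * v.coeff 3 else 0)
      + (if n = 8 then v.coeff 4 * v.coeff 4 else 0)
      + (if n = 9 then v.coeff 4 * v.coeff 5 else 0)
      + (if n = 10 then v.coeff 4 * v.coeff 6 else 0)
      + (if n = 4 then v.coeff 5 / 2 else 0) + (if n = 6 then v.coeff 5 * v.coeff 1 else 0)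
      + (if n = 8 then v.coeff 5 * v.coeff 3 else 0)
      + (if n = 9 then v.coeff 5 * v.coeff 4 else 0)
      + (if n = 10 then v.coeff 5 * v.coeff 5 else 0)
      + (if n = 11 then v.coeff 5 * v.coeff 6 else 0)
      + (if n = 5 then v.coeff 6 / 2 else 0) + (if n = 7 then v.coeff 6 * v.coeff 1 else 0)
      + (if n = 9 then v.coeff 6 * v.coeff 3 else 0)
      + (if n = 10 then v.coeff 6 * v.coeff 4 else 0)
      + (if n = 11 then v.coeff 6 * v.coeff 5 else 0)
      + (if n = 12 then v.coeff 6 * v.coeff 6 else 0) := by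
    intro n
    simp only [hsdef, mul_add, add_mul, HahnSeries.single_mul_single, HahnSeries.coeff_add,
      HahnSeries.coeff_single]
    norm_num
    ring
  have e0 := key 0
  have e2 := key 2
  have e3 := key 3
  have e4 := key 4
  have e5 := key 5
  rw [hv2eq 0 (by norm_num), ss 0] at e0
  rw [hv2eq 2 (by norm_num), ss 2] at e2
  rw [hv2eq 3 (by norm_num), ss 3] at e3
  rw [hv2eq 4 (by norm_num), ss 4] at e4
  rw [hv2eq 5 (by norm_num), ss 5] at e5
  norm_num at e0 e2 e3 e4 e5
  have h1 : v.coeff 1 = u.coeff 0 := by linear_combination e0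
  have h3 : v.coeff 3 = 2 * (u.coeff 0) ^ 2 - u.coeff 2 := by
    linear_combination -e2 + (2 * v.coeff 1 + 2 * u.coeff 0) * h1
  have h4 : v.coeff 4 = -(1/2) * u.coeff 3 := by linear_combination -(1/2) * e3
  have h5 : v.coeff 5 = (8/3) * (u.coeff 0) ^ 3 - (4/3) * u.coeff 0 * u.coeff 2
      - (1/3) * u.coeff 4 := by
    linear_combination (-1/3) * e4 + (4/3 * v.coeff 3) * h1 + (4/3 * u.coeff 0) * h3
  have h6 : v.coeff 6 = -(1/2) * u.coeff 0 * u.coeff 3 - (1/4) * u.coeff 5 := by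
    linear_combination (-1/4) * e5 + v.coeff 4 * h1 + u.coeff 0 * h4
  exact ⟨h1, h3, h4, h5, h6⟩
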